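/- Theorem 3.3 (equivalence of minimizers and weak solutions): Let u : Ω → ℝ be Lipschitz. Then u is a minimizer for 𝔉 if and only if u is a weak solution of div N(u) = H. -/

import Mathlib

open MeasureTheory
open scoped RealInnerProductSpace ENNReal

/-- `u` is a minimizer for the generalized p-area functional
`𝔉(v) = ∫_Ω (|∇v + F⃗| + H v)`: for every test function `φ`
(a Lipschitz function with compact support contained in `Ω`) one has `𝔉(u) ≤ 𝔉(u + φ)`
(Lebesgue-a.e., `∇(u+φ) = ∇u + ∇φ`). -/
def IsPMinimizer {m : ℕ} (Ω : Set (EuclideanSpace ℝ (Fin m)))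
    (F : EuclideanSpace ℝ (Fin m) → EuclideanSpace ℝ (Fin m))
    (H : EuclideanSpace ℝ (Fin m) → ℝ) (u : EuclideanSpace ℝ (Fin m) → ℝ) : Prop :=
  ∀ φ : EuclideanSpace ℝ (Fin m) → ℝ, (∃ K, LipschitzWith K φ) →
    HasCompactSupport φ → tsupport φ ⊆ Ω →
    (∫ x in Ω, (‖gradient u x + F x‖ + H x * u x)) ≤
      ∫ x in Ω, (‖gradient u x + gradient φ x + F x‖ + H x * (u x + φ x))

/-- `u` is a weak solution of `div N(u) = H`, where `N(u) = (∇u + F⃗)/|∇u + F⃗|`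
on `Ω ∖ S(u)` and `S(u) = {x ∈ Ω : ∇u + F⃗ = 0}`: for every test function `φ`,
`∫_{S(u)} |∇φ| + ∫_{Ω∖S(u)} N(u)·∇φ + ∫_Ω H φ ≥ 0`. -/
def IsPWeakSolution {m : ℕ} (Ω : Set (EuclideanSpace ℝ (Fin m)))
    (F : EuclideanSpace ℝ (Fin m) → EuclideanSpace ℝ (Fin m))
    (H : EuclideanSpace ℝ (Fin m) → ℝ) (u : EuclideanSpace ℝ (Fin m) → ℝ) : Prop :=
  ∀ φ : EuclideanSpace ℝ (Fin m) → ℝ, (∃ K, LipschitzWith K φ) →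
    HasCompactSupport φ → tsupport φ ⊆ Ω →
    0 ≤ (∫ x in {x ∈ Ω | gradient u x + F x = 0}, ‖gradient φ x‖) +
        (∫ x in Ω \ {x ∈ Ω | gradient u x + F x = 0},
          ⟪‖gradient u x + F x‖⁻¹ • (gradient u x + F x), gradient φ x⟫) +
        ∫ x in Ω, H x * φ x



open Filter
open scoped Topology NNReal

section Aux

variable {E : Type*} [NormedAddCommGroup E] [InnerProductSpace ℝ E]

lemma aux_norm_gradient [CompleteSpace E] (f : E → ℝ) (x : E) : ‖gradient f x‖ = ‖fderiv ℝ f x‖ :=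
  (InnerProductSpace.toDual ℝ E).symm.norm_map _

lemma aux_measurable_gradient [CompleteSpace E] [MeasurableSpace E] [BorelSpace E] (f : E → ℝ) :
    Measurable (gradient f) :=
  ((InnerProductSpace.toDual ℝ E).symm.continuous.measurable).comp (measurable_fderiv ℝ f)

lemma aux_gradient_const_mul [CompleteSpace E] {f : E → ℝ} {t : ℝ} (ht : t ≠ 0) (x : E) :
    gradient (fun y => t * f y) x = t • gradient f x := by
  by_cases hd : DifferentiableAt ℝ f x
  · show (InnerProductSpace.toDual ℝ E).symm _ = _
    rw [fderiv_const_mul hd t, LinearIsometryEquiv.map_smul]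
    rfl
  · have hd2 : ¬ DifferentiableAt ℝ (fun y => t * f y) x := by
      intro h
      have := h.const_mul t⁻¹
      simp only [← mul_assoc, inv_mul_cancel₀ ht, one_mul] at this
      exact hd this
    show (InnerProductSpace.toDual ℝ E).symm _ = t • (InnerProductSpace.toDual ℝ E).symm _
    rw [fderiv_zero_of_not_differentiableAt hd, fderiv_zero_of_not_differentiableAt hd2]
    simp

lemma aux_inner_unit_le (a b : E) (ha : a ≠ 0) : ⟪‖a‖⁻¹ • a, b⟫ ≤ ‖a + b‖ - ‖a‖ := by
  have h0 : (0:ℝ) < ‖a‖ := norm_pos_iff.mpr ha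
  have h1 : ⟪a, a + b⟫ ≤ ‖a‖ * ‖a + b‖ := real_inner_le_norm a (a + b)
  have h2 : ⟪a, a + b⟫ = ‖a‖ ^ 2 + ⟪a, b⟫ := by
    rw [inner_add_right, real_inner_self_eq_norm_sq]
  rw [real_inner_smul_left]
  have key : ⟪a, b⟫ ≤ ‖a‖ * ‖a + b‖ - ‖a‖ ^ 2 := by nlinarith
  calc ‖a‖⁻¹ * ⟪a, b⟫ ≤ ‖a‖⁻¹ * (‖a‖ * ‖a + b‖ - ‖a‖ ^ 2) :=
        mul_le_mul_of_nonneg_left key (by positivity)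
    _ = ‖a + b‖ - ‖a‖ := by field_simp

lemma aux_abs_diffquot_le (a b : E) {t : ℝ} (ht : 0 < t) :
    |(‖a + t • b‖ - ‖a‖) / t| ≤ ‖b‖ := by
  have h1 : |‖a + t • b‖ - ‖a‖| ≤ ‖t • b‖ := by
    simpa using abs_norm_sub_norm_le (a + t • b) a
  rw [norm_smul, Real.norm_eq_abs, abs_of_pos ht] at h1
  rw [abs_div, abs_of_pos ht, div_le_iff₀ ht]
  linarith

lemma aux_tendsto_diffquot (a b : E) (ha : a ≠ 0) :
    Tendsto (fun n : ℕ => (‖a + (1 / ((n : ℝ) + 1)) • b‖ - ‖a‖) / (1 / ((n : ℝ) + 1)))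
      atTop (𝓝 ⟪‖a‖⁻¹ • a, b⟫) := by
  have h0 : (0:ℝ) < ‖a‖ := norm_pos_iff.mpr ha
  have htn : Tendsto (fun n : ℕ => 1 / ((n : ℝ) + 1)) atTop (𝓝 0) :=
    tendsto_one_div_add_atTop_nhds_zero_nat
  have hid : ∀ t : ℝ, 0 < t →
      (‖a + t • b‖ - ‖a‖) / t = (2 * ⟪a, b⟫ + t * ‖b‖ ^ 2) / (‖a + t • b‖ + ‖a‖) := by
    intro t htp
    have hden : 0 < ‖a + t • b‖ + ‖a‖ := by positivity
    have hsq : ‖a + t • b‖ ^ 2 = ‖a‖ ^ 2 + 2 * (t * ⟪a, b⟫) + t ^ 2 * ‖b‖ ^ 2 := by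
      rw [norm_add_sq_real, real_inner_smul_right, norm_smul, Real.norm_eq_abs,
        abs_of_pos htp, mul_pow]
    rw [div_eq_div_iff htp.ne' hden.ne']
    nlinarith [hsq]
  have hconv : Tendsto (fun n : ℕ =>
      (2 * ⟪a, b⟫ + (1 / ((n : ℝ) + 1)) * ‖b‖ ^ 2) / (‖a + (1 / ((n : ℝ) + 1)) • b‖ + ‖a‖))
      atTop (𝓝 ((2 * ⟪a, b⟫ + 0 * ‖b‖ ^ 2) / (‖a + (0:ℝ) • b‖ + ‖a‖))) := by
    apply Tendsto.div
    · exact tendsto_const_nhds.add (htn.mul tendsto_const_nhds)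
    · exact ((((htn.smul_const b).const_add a)).norm).add tendsto_const_nhds
    · simp [h0.ne']
  have : ((2 * ⟪a, b⟫ + 0 * ‖b‖ ^ 2) / (‖a + (0:ℝ) • b‖ + ‖a‖)) = ⟪‖a‖⁻¹ • a, b⟫ := by
    rw [real_inner_smul_left]
    simp only [zero_smul, add_zero, zero_mul]
    field_simp
    ring
  rw [this] at hconv
  apply hconv.congr
  intro n
  exact (hid (1 / ((n : ℝ) + 1)) (by positivity)).symm

end Aux

section Core

open Filter

variable {α : Type*} [MeasurableSpace α] {μ : MeasureTheory.Measure α}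
variable {E : Type*} [NormedAddCommGroup E] [InnerProductSpace ℝ E]
  [SecondCountableTopology E] [MeasurableSpace E] [BorelSpace E]

open Classical in
/-- The pointwise integrand of the weak-solution functional. -/
noncomputable def pcal (a b : α → E) : α → ℝ := fun x =>
  if a x = 0 then ‖b x‖ else ⟪‖a x‖⁻¹ • a x, b x⟫

lemma pcal_abs_le (a b : α → E) (x : α) : |pcal a b x| ≤ ‖b x‖ := by
  unfold pcal
  split_ifs with hx
  · simp
  · have h1 : ‖‖a x‖⁻¹ • a x‖ = 1 := by
      rw [norm_smul, Real.norm_eq_abs, abs_inv, abs_norm,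
        inv_mul_cancel₀ (norm_ne_zero_iff.mpr hx)]
    calc |⟪‖a x‖⁻¹ • a x, b x⟫| ≤ ‖‖a x‖⁻¹ • a x‖ * ‖b x‖ := abs_real_inner_le_norm _ _
      _ = ‖b x‖ := by rw [h1, one_mul]

lemma pcal_le (a b : α → E) (x : α) : pcal a b x ≤ ‖a x + b x‖ - ‖a x‖ := by
  unfold pcal
  split_ifs with hx
  · simp [hx]
  · exact aux_inner_unit_le _ _ hx

lemma pcal_aesm {a : α → E} (b : α → E) (ha : MeasureTheory.AEStronglyMeasurable a μ)
    (hb : Measurable b) : MeasureTheory.AEStronglyMeasurable (pcal a b) μ := by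
  classical
  obtain ⟨a', ha'sm, haa'⟩ := ha
  have h'meas : Measurable (fun x => if a' x = 0 then ‖b x‖ else ⟪‖a' x‖⁻¹ • a' x, b x⟫) := by
    refine Measurable.ite (ha'sm.measurable (measurableSet_singleton 0)) hb.norm ?_
    exact (ha'sm.measurable.norm.inv.smul ha'sm.measurable).inner hb
  refine h'meas.aestronglyMeasurable.congr ?_
  filter_upwards [haa'] with x hx
  unfold pcal
  rw [hx]

lemma pcal_int [MeasureTheory.IsFiniteMeasure μ] {a : α → E} (b : α → E)
    (ha : MeasureTheory.AEStronglyMeasurable a μ) (hb : Measurable b)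
    (Kb : ℝ) (hKb : ∀ x, ‖b x‖ ≤ Kb) : MeasureTheory.Integrable (pcal a b) μ := by
  refine (MeasureTheory.memLp_top_of_bound (pcal_aesm b ha hb) Kb ?_).integrable le_top
  refine Filter.Eventually.of_forall fun x => ?_
  rw [Real.norm_eq_abs]
  exact (pcal_abs_le a b x).trans (hKb x)

lemma pcal_split [MeasureTheory.IsFiniteMeasure μ] {a : α → E} (b : α → E)
    (ha : MeasureTheory.AEStronglyMeasurable a μ) (hb : Measurable b)
    (Kb : ℝ) (hKb : ∀ x, ‖b x‖ ≤ Kb) :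
    (∫ x in {x | a x = 0}, ‖b x‖ ∂μ) +
      (∫ x in {x | a x = 0}ᶜ, ⟪‖a x‖⁻¹ • a x, b x⟫ ∂μ) = ∫ x, pcal a b x ∂μ := by
  classical
  have hint : MeasureTheory.Integrable (pcal a b) μ := pcal_int b ha hb Kb hKb
  obtain ⟨a', ha'sm, haa'⟩ := ha
  have hZae : {x | a x = 0} =ᵐ[μ] (a' ⁻¹' {0}) := by
    filter_upwards [haa'] with x hx
    show (a x = 0) = (a' x ∈ ({0} : Set E))
    rw [hx]
    simp
  have hZnm : MeasureTheory.NullMeasurableSet {x | a x = 0} μ :=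
    ((ha'sm.measurable (measurableSet_singleton 0)).nullMeasurableSet).congr hZae.symm
  have e1 : ∫ x in {x | a x = 0}, ‖b x‖ ∂μ = ∫ x in {x | a x = 0}, pcal a b x ∂μ := by
    refine (MeasureTheory.setIntegral_congr_ae₀ hZnm ?_).symm
    refine Filter.Eventually.of_forall fun x hx => ?_
    have hx' : a x = 0 := hx
    unfold pcal
    rw [if_pos hx']
  have e2 : ∫ x in {x | a x = 0}ᶜ, ⟪‖a x‖⁻¹ • a x, b x⟫ ∂μ
      = ∫ x in {x | a x = 0}ᶜ, pcal a b x ∂μ := by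
    refine (MeasureTheory.setIntegral_congr_ae₀ hZnm.compl ?_).symm
    refine Filter.Eventually.of_forall fun x hx => ?_
    have hx' : ¬ a x = 0 := hx
    unfold pcal
    rw [if_neg hx']
  rw [e1, e2, MeasureTheory.integral_add_compl₀ hZnm hint]

lemma pcal_tendsto [MeasureTheory.IsFiniteMeasure μ] {a : α → E} (b : α → E)
    (ha : MeasureTheory.AEStronglyMeasurable a μ) (hb : Measurable b)
    (Kb : ℝ) (hKb : ∀ x, ‖b x‖ ≤ Kb) :
    Tendsto (fun n : ℕ => ∫ x, (‖a x + (1 / ((n : ℝ) + 1)) • b x‖ - ‖a x‖) / (1 / ((n : ℝ) + 1)) ∂μ)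
      atTop (𝓝 (∫ x, pcal a b x ∂μ)) := by
  refine MeasureTheory.tendsto_integral_of_dominated_convergence (fun _ => Kb) ?_ ?_ ?_ ?_
  · intro n
    have h1 : MeasureTheory.AEStronglyMeasurable
        (fun x => (‖a x + (1 / ((n : ℝ) + 1)) • b x‖ - ‖a x‖) * (1 / ((n : ℝ) + 1))⁻¹) μ :=
      ((ha.add ((hb.aestronglyMeasurable).const_smul _)).norm.sub ha.norm).mul_const _
    simpa [div_eq_mul_inv] using h1
  · exact MeasureTheory.integrable_const Kb
  · intro n
    refine Filter.Eventually.of_forall fun x => ?_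
    have hp : (0:ℝ) < 1 / ((n : ℝ) + 1) := by positivity
    rw [Real.norm_eq_abs]
    exact (aux_abs_diffquot_le (a x) (b x) hp).trans (hKb x)
  · refine Filter.Eventually.of_forall fun x => ?_
    by_cases hax : a x = 0
    · have hval : ∀ n : ℕ, (‖a x + (1 / ((n : ℝ) + 1)) • b x‖ - ‖a x‖) / (1 / ((n : ℝ) + 1))
          = ‖b x‖ := by
        intro n
        have hp : (0:ℝ) < 1 / ((n : ℝ) + 1) := by positivity
        rw [hax, zero_add, norm_smul, Real.norm_eq_abs, abs_of_pos hp, norm_zero, sub_zero,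
          mul_comm, mul_div_assoc, div_self hp.ne', mul_one]
      have hpc : pcal a b x = ‖b x‖ := by unfold pcal; rw [if_pos hax]
      rw [hpc]
      exact (tendsto_const_nhds : Tendsto (fun _ : ℕ => ‖b x‖) atTop (𝓝 ‖b x‖)).congr
        (fun n => (hval n).symm)
    · have hpc : pcal a b x = ⟪‖a x‖⁻¹ • a x, b x⟫ := by unfold pcal; rw [if_neg hax]
      rw [hpc]
      exact aux_tendsto_diffquot (a x) (b x) hax

end Core

set_option maxHeartbeats 2000000 in
/-- **Theorem 3.3**: a Lipschitz function `u` is a minimizer for `𝔉` if and only if it is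
a weak solution of `div N(u) = H`. -/
theorem isPMinimizer_iff_isPWeakSolution {m : ℕ} (hm : 1 ≤ m)
    (Ω : Set (EuclideanSpace ℝ (Fin m)))
    (hΩopen : IsOpen Ω) (hΩbdd : Bornology.IsBounded Ω)
    (hΩne : Ω.Nonempty) (hΩconn : IsConnected Ω)
    (F : EuclideanSpace ℝ (Fin m) → EuclideanSpace ℝ (Fin m))
    (hF : IntegrableOn F Ω volume)
    (H : EuclideanSpace ℝ (Fin m) → ℝ)
    (hH : MemLp H ⊤ (volume.restrict Ω))
    (u : EuclideanSpace ℝ (Fin m) → ℝ) (hu : ∃ K, LipschitzOnWith K u Ω) :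
    IsPMinimizer Ω F H u ↔ IsPWeakSolution Ω F H u := by
  classical
  obtain ⟨K, hK⟩ := hu
  have hΩm : MeasurableSet Ω := hΩopen.measurableSet
  haveI : IsFiniteMeasure (volume.restrict Ω) :=
    ⟨by rw [Measure.restrict_apply_univ]; exact hΩbdd.measure_lt_top⟩
  -- measurability and boundedness of the gradient of u on Ω
  have hgu_meas : Measurable (gradient u) := aux_measurable_gradient u
  have hgu_bdd : ∀ x ∈ Ω, ‖gradient u x‖ ≤ K := fun x hx => by
    rw [aux_norm_gradient]
    exact norm_fderiv_le_of_lipschitzOn ℝ (hΩopen.mem_nhds hx) hK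
  have hgu_int : Integrable (gradient u) (volume.restrict Ω) := by
    refine (memLp_top_of_bound hgu_meas.aestronglyMeasurable K ?_).integrable le_top
    filter_upwards [ae_restrict_mem hΩm] with x hx using hgu_bdd x hx
  have ha_aesm : AEStronglyMeasurable (fun x => gradient u x + F x) (volume.restrict Ω) :=
    hgu_meas.aestronglyMeasurable.add hF.aestronglyMeasurable
  have ha_int : Integrable (fun x => gradient u x + F x) (volume.restrict Ω) := hgu_int.add hF
  -- boundedness of u on Ω
  obtain ⟨x₀, hx₀⟩ := hΩne
  obtain ⟨r, hrΩ⟩ := hΩbdd.subset_closedBall x₀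
  have hu_bdd : ∀ x ∈ Ω, ‖u x‖ ≤ ‖u x₀‖ + K * r := by
    intro x hx
    have h1 : dist (u x) (u x₀) ≤ K * dist x x₀ := hK.dist_le_mul x hx x₀ hx₀
    have h2 : dist x x₀ ≤ r := by simpa [Metric.mem_closedBall] using hrΩ hx
    have h3 : (K : ℝ) * dist x x₀ ≤ K * r := mul_le_mul_of_nonneg_left h2 K.coe_nonneg
    have h4 : ‖u x‖ - ‖u x₀‖ ≤ dist (u x) (u x₀) := by
      rw [Real.dist_eq, Real.norm_eq_abs, Real.norm_eq_abs]
      exact abs_sub_abs_le_abs_sub _ _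
    linarith
  have hu_aesm : AEStronglyMeasurable u (volume.restrict Ω) :=
    hK.continuousOn.aestronglyMeasurable hΩm
  -- essential bound for H
  have hCH : ∀ᵐ x ∂(volume.restrict Ω), ‖H x‖ ≤ (eLpNorm H ⊤ (volume.restrict Ω)).toReal := by
    have h2 : eLpNormEssSup H (volume.restrict Ω) < ⊤ := by
      rw [← eLpNorm_exponent_top]; exact hH.2
    filter_upwards [ae_le_eLpNormEssSup (f := H) (μ := volume.restrict Ω)] with x hx
    have h3 : ((‖H x‖₊ : ℝ≥0∞)).toReal ≤ (eLpNormEssSup H (volume.restrict Ω)).toReal :=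
      ENNReal.toReal_mono h2.ne hx
    rw [eLpNorm_exponent_top]
    simpa using h3
  set CH : ℝ := (eLpNorm H ⊤ (volume.restrict Ω)).toReal with hCHdef
  have hCH0 : 0 ≤ CH := ENNReal.toReal_nonneg
  -- integrability of H times a bounded a.e.-strongly-measurable function
  have hmul_int : ∀ (v : EuclideanSpace ℝ (Fin m) → ℝ),
      AEStronglyMeasurable v (volume.restrict Ω) → ∀ C : ℝ,
      (∀ᵐ x ∂(volume.restrict Ω), ‖v x‖ ≤ C) →
      Integrable (fun x => H x * v x) (volume.restrict Ω) := by
    intro v hv C hvC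
    refine (memLp_top_of_bound (hH.aestronglyMeasurable.mul hv) (CH * C) ?_).integrable le_top
    filter_upwards [hCH, hvC] with x h1 h2
    show ‖H x * v x‖ ≤ CH * C
    rw [norm_mul]
    exact mul_le_mul h1 h2 (norm_nonneg _) hCH0
  have hHu_int : Integrable (fun x => H x * u x) (volume.restrict Ω) :=
    hmul_int u hu_aesm _ (by filter_upwards [ae_restrict_mem hΩm] with x hx using hu_bdd x hx)
  have hInt1 : Integrable (fun x => ‖gradient u x + F x‖ + H x * u x) (volume.restrict Ω) :=
    ha_int.norm.add hHu_int
  constructor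
  · -- minimizer → weak solution
    intro hmin φ hφlip hφc hφΩ
    obtain ⟨Kφ, hKφ⟩ := hφlip
    have hb_meas : Measurable (gradient φ) := aux_measurable_gradient φ
    have hb_bdd : ∀ x, ‖gradient φ x‖ ≤ Kφ := fun x => by
      rw [aux_norm_gradient]
      exact norm_fderiv_le_of_lipschitz ℝ hKφ
    have hb_int : Integrable (gradient φ) (volume.restrict Ω) :=
      (memLp_top_of_bound hb_meas.aestronglyMeasurable Kφ
        (Filter.Eventually.of_forall hb_bdd)).integrable le_top
    obtain ⟨Cφ, hCφ⟩ := hKφ.continuous.bounded_above_of_compact_support hφc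
    have hHφ_int : Integrable (fun x => H x * φ x) (volume.restrict Ω) :=
      hmul_int φ hKφ.continuous.aestronglyMeasurable Cφ (Filter.Eventually.of_forall hCφ)
    -- rewrite the two set integrals as integrals over the restricted measure
    have hsets1 : {x ∈ Ω | gradient u x + F x = 0}
        = {x | gradient u x + F x = 0} ∩ Ω := by
      ext x; simp only [Set.mem_setOf_eq, Set.mem_inter_iff]; tauto
    have hsets2 : Ω \ {x ∈ Ω | gradient u x + F x = 0}
        = {x | gradient u x + F x = 0}ᶜ ∩ Ω := by
      ext x
      simp only [Set.mem_diff, Set.mem_setOf_eq, Set.mem_inter_iff, Set.mem_compl_iff]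
      tauto
    have hI1 : (∫ x in {x ∈ Ω | gradient u x + F x = 0}, ‖gradient φ x‖)
        = ∫ x in {x | gradient u x + F x = 0}, ‖gradient φ x‖ ∂(volume.restrict Ω) := by
      rw [hsets1, ← Measure.restrict_restrict' hΩm]
    have hI2 : (∫ x in Ω \ {x ∈ Ω | gradient u x + F x = 0},
          ⟪‖gradient u x + F x‖⁻¹ • (gradient u x + F x), gradient φ x⟫)
        = ∫ x in {x | gradient u x + F x = 0}ᶜ,
            ⟪‖gradient u x + F x‖⁻¹ • (gradient u x + F x), gradient φ x⟫
            ∂(volume.restrict Ω) := by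
      rw [hsets2, ← Measure.restrict_restrict' hΩm]
    have hsplit : (∫ x in {x | gradient u x + F x = 0}, ‖gradient φ x‖ ∂(volume.restrict Ω)) +
        (∫ x in {x | gradient u x + F x = 0}ᶜ,
          ⟪‖gradient u x + F x‖⁻¹ • (gradient u x + F x), gradient φ x⟫
          ∂(volume.restrict Ω))
        = ∫ x, pcal (fun y => gradient u y + F y) (gradient φ) x ∂(volume.restrict Ω) :=
      pcal_split (gradient φ) ha_aesm hb_meas Kφ hb_bdd
    rw [hI1, hI2, hsplit]
    -- the sequence of difference quotients
    have hDCT : Tendsto (fun n : ℕ => ∫ x in Ω,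
        (‖(gradient u x + F x) + (1 / ((n : ℝ) + 1)) • gradient φ x‖
          - ‖gradient u x + F x‖) / (1 / ((n : ℝ) + 1)))
        atTop (𝓝 (∫ x, pcal (fun y => gradient u y + F y) (gradient φ) x
          ∂(volume.restrict Ω))) :=
      pcal_tendsto (gradient φ) ha_aesm hb_meas Kφ hb_bdd
    have step : ∀ n : ℕ, 0 ≤ (∫ x in Ω,
        (‖(gradient u x + F x) + (1 / ((n : ℝ) + 1)) • gradient φ x‖
          - ‖gradient u x + F x‖) / (1 / ((n : ℝ) + 1))) + ∫ x in Ω, H x * φ x := by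
      intro n
      set tn : ℝ := 1 / ((n : ℝ) + 1) with htn
      have htpos : 0 < tn := by rw [htn]; positivity
      -- the rescaled test function
      have hlipn : LipschitzWith (‖tn‖₊ * Kφ) (fun x => tn * φ x) := by
        have h := (lipschitzWith_smul (β := ℝ) tn).comp hKφ
        simpa [Function.comp_def, smul_eq_mul] using h
      have hsuppn : tsupport (fun x => tn * φ x) ⊆ tsupport φ := by
        refine closure_mono ?_
        intro x hx
        simp only [Function.mem_support] at hx ⊢
        exact fun h0 => hx (by rw [h0, mul_zero])
      have hcsn : HasCompactSupport (fun x => tn * φ x) :=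
        HasCompactSupport.mono hφc (fun x hx => by
          simp only [Function.mem_support] at hx ⊢
          exact fun h0 => hx (by rw [h0, mul_zero]))
      have key := hmin (fun x => tn * φ x) ⟨_, hlipn⟩ hcsn (hsuppn.trans hφΩ)
      have hfun : (fun x => ‖gradient u x + gradient (fun y => tn * φ y) x + F x‖
            + H x * (u x + tn * φ x))
          = (fun x => ‖(gradient u x + F x) + tn • gradient φ x‖
            + (H x * u x + tn * (H x * φ x))) := by
        funext x
        rw [aux_gradient_const_mul htpos.ne' x,
          add_right_comm (gradient u x) (tn • gradient φ x) (F x)]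
        ring_nf
      rw [show (fun x => ‖gradient u x + gradient (fun y => tn * φ y) x + F x‖
            + H x * (u x + (fun y => tn * φ y) x))
          = (fun x => ‖gradient u x + gradient (fun y => tn * φ y) x + F x‖
            + H x * (u x + tn * φ x)) from rfl, hfun] at key
      have hnorm2 : Integrable (fun x => ‖(gradient u x + F x) + tn • gradient φ x‖)
          (volume.restrict Ω) := (ha_int.add (hb_int.smul tn)).norm
      have hInt2n : Integrable (fun x => ‖(gradient u x + F x) + tn • gradient φ x‖
          + (H x * u x + tn * (H x * φ x))) (volume.restrict Ω) :=
        hnorm2.add (hHu_int.add (hHφ_int.const_mul tn))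
      have h0 : 0 ≤ ∫ x in Ω, ((‖(gradient u x + F x) + tn • gradient φ x‖
          + (H x * u x + tn * (H x * φ x)))
          - (‖gradient u x + F x‖ + H x * u x)) := by
        rw [integral_sub hInt2n hInt1]
        linarith
      have heq2 : (fun x => (‖(gradient u x + F x) + tn • gradient φ x‖
            + (H x * u x + tn * (H x * φ x)))
            - (‖gradient u x + F x‖ + H x * u x))
          = (fun x => (‖(gradient u x + F x) + tn • gradient φ x‖
            - ‖gradient u x + F x‖) + tn * (H x * φ x)) := by
        funext x; ring
      have hdiffint : Integrable (fun x => ‖(gradient u x + F x) + tn • gradient φ x‖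
          - ‖gradient u x + F x‖) (volume.restrict Ω) := hnorm2.sub ha_int.norm
      rw [heq2, integral_add hdiffint (hHφ_int.const_mul tn),
        integral_const_mul] at h0
      have hdiv : ∫ x in Ω, (‖(gradient u x + F x) + tn • gradient φ x‖
            - ‖gradient u x + F x‖) / tn
          = (∫ x in Ω, (‖(gradient u x + F x) + tn • gradient φ x‖
            - ‖gradient u x + F x‖)) / tn := integral_div tn _
      rw [hdiv]
      have h1 := div_nonneg h0 htpos.le
      rwa [add_div, mul_div_cancel_left₀ _ htpos.ne'] at h1
    exact ge_of_tendsto' (hDCT.add tendsto_const_nhds) step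
  · -- weak solution → minimizer
    intro hw φ hφlip hφc hφΩ
    obtain ⟨Kφ, hKφ⟩ := hφlip
    have hb_meas : Measurable (gradient φ) := aux_measurable_gradient φ
    have hb_bdd : ∀ x, ‖gradient φ x‖ ≤ Kφ := fun x => by
      rw [aux_norm_gradient]
      exact norm_fderiv_le_of_lipschitz ℝ hKφ
    have hb_int : Integrable (gradient φ) (volume.restrict Ω) :=
      (memLp_top_of_bound hb_meas.aestronglyMeasurable Kφ
        (Filter.Eventually.of_forall hb_bdd)).integrable le_top
    obtain ⟨Cφ, hCφ⟩ := hKφ.continuous.bounded_above_of_compact_support hφc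
    have hHφ_int : Integrable (fun x => H x * φ x) (volume.restrict Ω) :=
      hmul_int φ hKφ.continuous.aestronglyMeasurable Cφ (Filter.Eventually.of_forall hCφ)
    have hpcal_int : Integrable (pcal (fun y => gradient u y + F y) (gradient φ))
        (volume.restrict Ω) := pcal_int (gradient φ) ha_aesm hb_meas Kφ hb_bdd
    have hws := hw φ ⟨Kφ, hKφ⟩ hφc hφΩ
    have hsets1 : {x ∈ Ω | gradient u x + F x = 0}
        = {x | gradient u x + F x = 0} ∩ Ω := by
      ext x; simp only [Set.mem_setOf_eq, Set.mem_inter_iff]; tauto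
    have hsets2 : Ω \ {x ∈ Ω | gradient u x + F x = 0}
        = {x | gradient u x + F x = 0}ᶜ ∩ Ω := by
      ext x
      simp only [Set.mem_diff, Set.mem_setOf_eq, Set.mem_inter_iff, Set.mem_compl_iff]
      tauto
    have hI1 : (∫ x in {x ∈ Ω | gradient u x + F x = 0}, ‖gradient φ x‖)
        = ∫ x in {x | gradient u x + F x = 0}, ‖gradient φ x‖ ∂(volume.restrict Ω) := by
      rw [hsets1, ← Measure.restrict_restrict' hΩm]
    have hI2 : (∫ x in Ω \ {x ∈ Ω | gradient u x + F x = 0},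
          ⟪‖gradient u x + F x‖⁻¹ • (gradient u x + F x), gradient φ x⟫)
        = ∫ x in {x | gradient u x + F x = 0}ᶜ,
            ⟪‖gradient u x + F x‖⁻¹ • (gradient u x + F x), gradient φ x⟫
            ∂(volume.restrict Ω) := by
      rw [hsets2, ← Measure.restrict_restrict' hΩm]
    have hsplit : (∫ x in {x | gradient u x + F x = 0}, ‖gradient φ x‖ ∂(volume.restrict Ω)) +
        (∫ x in {x | gradient u x + F x = 0}ᶜ,
          ⟪‖gradient u x + F x‖⁻¹ • (gradient u x + F x), gradient φ x⟫
          ∂(volume.restrict Ω))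
        = ∫ x, pcal (fun y => gradient u y + F y) (gradient φ) x ∂(volume.restrict Ω) :=
      pcal_split (gradient φ) ha_aesm hb_meas Kφ hb_bdd
    rw [hI1, hI2, hsplit] at hws
    -- integrability of the competitor integrand
    have hnorm2 : Integrable (fun x => ‖gradient u x + gradient φ x + F x‖)
        (volume.restrict Ω) := ((hgu_int.add hb_int).add hF).norm
    have hInt2 : Integrable (fun x => ‖gradient u x + gradient φ x + F x‖
        + H x * (u x + φ x)) (volume.restrict Ω) := by
      refine hnorm2.add (hmul_int _ (hu_aesm.add hKφ.continuous.aestronglyMeasurable)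
        ((‖u x₀‖ + K * r) + Cφ) ?_)
      filter_upwards [ae_restrict_mem hΩm] with x hx
      calc ‖u x + φ x‖ ≤ ‖u x‖ + ‖φ x‖ := norm_add_le _ _
        _ ≤ (‖u x₀‖ + K * r) + Cφ := add_le_add (hu_bdd x hx) (hCφ x)
    rw [← sub_nonneg, ← integral_sub hInt2 hInt1]
    have hmono : ∫ x in Ω, (pcal (fun y => gradient u y + F y) (gradient φ) x + H x * φ x)
        ≤ ∫ x in Ω, ((‖gradient u x + gradient φ x + F x‖ + H x * (u x + φ x))
          - (‖gradient u x + F x‖ + H x * u x)) := by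
      refine integral_mono_ae (hpcal_int.add hHφ_int) (hInt2.sub hInt1) ?_
      refine Filter.Eventually.of_forall fun x => ?_
      show pcal (fun y => gradient u y + F y) (gradient φ) x + H x * φ x
        ≤ (‖gradient u x + gradient φ x + F x‖ + H x * (u x + φ x))
          - (‖gradient u x + F x‖ + H x * u x)
      have hre : gradient u x + gradient φ x + F x
          = (gradient u x + F x) + gradient φ x := add_right_comm _ _ _
      have hp := pcal_le (fun y => gradient u y + F y) (gradient φ) x
      rw [hre, mul_add]
      linarith
    refine le_trans ?_ hmono
    rw [integral_add hpcal_int hHφ_int]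
    linarith
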